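/- Let 1/2 < s < t < 1, α ∈ ℂ, β ∈ ℝ², N > 0, and let f(x) = α e^{2πi N β·x}. Then for every a ∈ [1,∞), θ ∈ [0,2π), b ∈ ℝ², the integral defining the general curvelet transform W_f(a,θ,b) = ∫_{ℝ²} conj(w_{aθb}(x)) f(x) dx converges absolutely and W_f(a,θ,b) = a^{-(s+t)/2} α e^{2πi N β·b} conj(ŵ(A_a^{-1} R_θ^{-1}(a e_θ − N β))). -/

import Mathlib

set_option maxHeartbeats 1000000


noncomputable section
open MeasureTheory Real Complex
open scoped Real

abbrev R2 := EuclideanSpace ℝ (Fin 2)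

/-- The vector `(x, y)` in `ℝ²`. -/
def V2 (x y : ℝ) : R2 := (WithLp.equiv 2 (Fin 2 → ℝ)).symm ![x, y]

/-- The unit vector `e_θ = (cos θ, sin θ)`. -/
def eTheta (θ : ℝ) : R2 := V2 (Real.cos θ) (Real.sin θ)

/-- Counterclockwise rotation of `ℝ²` by the angle `θ` (so `rot (-θ)` is `R_θ⁻¹`). -/
def rot (θ : ℝ) (x : R2) : R2 :=
  V2 (Real.cos θ * x 0 - Real.sin θ * x 1) (Real.sin θ * x 0 + Real.cos θ * x 1)

/-- The scaling map `A_a = diag (a^t, a^s)`. -/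
def Aa (t s a : ℝ) (x : R2) : R2 := V2 (a ^ t * x 0) (a ^ s * x 1)

/-- The inverse scaling map `A_a⁻¹ = diag (a^{-t}, a^{-s})`. -/
def AaInv (t s a : ℝ) (x : R2) : R2 := V2 (a ^ (-t) * x 0) (a ^ (-s) * x 1)

/-- The Fourier transform `ĝ(ξ) = ∫ e^{-2πi x·ξ} g(x) dx` on `ℝ²`. -/
def ft (g : R2 → ℂ) (ξ : R2) : ℂ :=
  ∫ x : R2, Complex.exp (-(2 * ↑π * Complex.I) * ((inner ℝ x ξ : ℝ) : ℂ)) * g x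

/-- The general curvelet `w_{aθb}(x) = a^{(t+s)/2} e^{2πi a(x-b)·e_θ} w(A_a R_θ⁻¹ (x-b))`. -/
def curvelet (w : R2 → ℂ) (t s a θ : ℝ) (b x : R2) : ℂ :=
  ((a ^ ((t + s) / 2) : ℝ) : ℂ) *
    Complex.exp (2 * ↑π * Complex.I * ↑a * ((inner ℝ (x - b) (eTheta θ) : ℝ) : ℂ)) *
    w (Aa t s a (rot (-θ) (x - b)))

/-- The general curvelet transform `W_f(a,θ,b) = ∫ conj (w_{aθb}(x)) f(x) dx`. -/
def Wf (w f : R2 → ℂ) (t s a θ : ℝ) (b : R2) : ℂ :=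
  ∫ x : R2, (starRingEnd ℂ) (curvelet w t s a θ b x) * f x

/-- The mother curvelet: its Fourier transform `ŵ` is real-valued, non-negative, radial, and
supported in the closed unit ball.  (Smoothness of `ŵ` follows since `w` is Schwartz.) -/
def IsMotherCurvelet (w : R2 → ℂ) : Prop :=
  (∀ ξ : R2, (ft w ξ).im = 0) ∧ (∀ ξ : R2, 0 ≤ (ft w ξ).re) ∧
  (∀ ξ η : R2, ‖ξ‖ = ‖η‖ → ft w ξ = ft w η) ∧
  (∀ ξ : R2, 1 < ‖ξ‖ → ft w ξ = 0)

/-- The plane wave `f(x) = α e^{2πi N β·x}`. -/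
def planeWave (α : ℂ) (β : R2) (N : ℝ) (x : R2) : ℂ :=
  α * Complex.exp (2 * ↑π * Complex.I * ↑N * ((inner ℝ β x : ℝ) : ℂ))

/- ### Auxiliary lemmas -/

@[simp] lemma V2_apply0 (x y : ℝ) : V2 x y 0 = x := rfl
@[simp] lemma V2_apply1 (x y : ℝ) : V2 x y 1 = y := rfl

lemma R2_ext {x y : R2} (h0 : x 0 = y 0) (h1 : x 1 = y 1) : x = y := by
  ext i; fin_cases i <;> assumption

/-- The linear substitution map `x ↦ A_a R_θ⁻¹ x`. -/
def gLin (t s a θ : ℝ) : R2 →ₗ[ℝ] R2 where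
  toFun x := Aa t s a (rot (-θ) x)
  map_add' x y := by apply R2_ext <;> simp [Aa, rot] <;> ring
  map_smul' c x := by apply R2_ext <;> simp [Aa, rot] <;> ring

@[simp] lemma gLin_apply (t s a θ : ℝ) (x : R2) :
    gLin t s a θ x = Aa t s a (rot (-θ) x) := rfl

lemma det_gLin (t s a θ : ℝ) (ha0 : 0 < a) :
    LinearMap.det (gLin t s a θ) = a ^ (t + s) := by
  rw [← LinearMap.det_toMatrix (PiLp.basisFun 2 ℝ (Fin 2)), Matrix.det_fin_two]
  simp only [LinearMap.toMatrix_apply, PiLp.basisFun_repr, PiLp.basisFun_apply, gLin_apply]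
  simp [Aa, rot, WithLp.equiv_symm_apply, Pi.single, Function.update]
  rw [Real.rpow_add ha0]
  linear_combination (a ^ t * a ^ s) * Real.sin_sq_add_cos_sq θ

lemma inner_key (t s a θ N : ℝ) (ha0 : 0 < a) (β x : R2) :
    (inner ℝ (Aa t s a (rot (-θ) x)) (AaInv t s a (rot (-θ) (a • eTheta θ - N • β))) : ℝ)
      = a * (inner ℝ x (eTheta θ) : ℝ) - N * (inner ℝ β x : ℝ) := by
  have h1 : a ^ t * a ^ (-t) = 1 := by rw [← Real.rpow_add ha0]; simp
  have h2 : a ^ s * a ^ (-s) = 1 := by rw [← Real.rpow_add ha0]; simp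
  simp only [PiLp.inner_apply, Fin.sum_univ_two, RCLike.inner_apply, conj_trivial,
    Aa, AaInv, rot, eTheta, V2_apply0, V2_apply1, PiLp.sub_apply, PiLp.smul_apply,
    smul_eq_mul, Real.cos_neg, Real.sin_neg]
  linear_combination (x 0 * (a * Real.cos θ - N * β 0) + x 1 * (a * Real.sin θ - N * β 1)) *
      (Real.sin_sq_add_cos_sq θ) +
    ((Real.cos θ * x 0 + Real.sin θ * x 1) *
      (Real.cos θ * (a * Real.cos θ - N * β 0) + Real.sin θ * (a * Real.sin θ - N * β 1))) * h1 +
    ((-Real.sin θ * x 0 + Real.cos θ * x 1) *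
      (-Real.sin θ * (a * Real.cos θ - N * β 0) + Real.cos θ * (a * Real.sin θ - N * β 1))) * h2


/-- For the plane wave `f(x) = α e^{2πi N β·x}`, the integral defining a general
curvelet coefficient converges absolutely and
`W_f(a,θ,b) = a^{-(s+t)/2} α e^{2πi N β·b} conj (ŵ(A_a⁻¹ R_θ⁻¹ (a e_θ - N β)))`. -/
theorem statement1 (s t : ℝ) (hs : 1 / 2 < s) (hst : s < t) (ht : t < 1)
    (w : SchwartzMap R2 ℂ) (hw : IsMotherCurvelet ⇑w)
    (α : ℂ) (β : R2) (N : ℝ) (hN : 0 < N)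
    (a : ℝ) (ha : 1 ≤ a) (θ : ℝ) (hθ : θ ∈ Set.Ico 0 (2 * π)) (b : R2) :
    Integrable
      (fun x : R2 => (starRingEnd ℂ) (curvelet (⇑w) t s a θ b x) * planeWave α β N x) ∧
    Wf (⇑w) (planeWave α β N) t s a θ b =
      ((a ^ (-((s + t) / 2)) : ℝ) : ℂ) * α *
        Complex.exp (2 * ↑π * Complex.I * ↑N * ((inner ℝ β b : ℝ) : ℂ)) *
        (starRingEnd ℂ) (ft (⇑w) (AaInv t s a (rot (-θ) (a • eTheta θ - N • β)))) := by
  have ha0 : (0 : ℝ) < a := one_pos.trans_le ha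
  set ξ : R2 := AaInv t s a (rot (-θ) (a • eTheta θ - N • β)) with hξ
  have hdet : LinearMap.det (gLin t s a θ) = a ^ (t + s) := det_gLin t s a θ ha0
  have hdetpos : (0 : ℝ) < a ^ (t + s) := Real.rpow_pos_of_pos ha0 _
  have hgcont : Continuous (gLin t s a θ) := (gLin t s a θ).continuous_of_finiteDimensional
  set C : ℂ := ((a ^ ((t + s) / 2) : ℝ) : ℂ) * α *
      Complex.exp (2 * ↑π * Complex.I * ↑N * ((inner ℝ β b : ℝ) : ℂ)) with hC
  set H : R2 → ℂ := fun y => Complex.exp (-(2 * ↑π * Complex.I) * ((inner ℝ y ξ : ℝ) : ℂ)) *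
      (starRingEnd ℂ) (w y) with hH
  have hmap : Measure.map (gLin t s a θ) volume
      = ENNReal.ofReal ((a ^ (t + s))⁻¹) • volume := by
    rw [Measure.map_linearMap_addHaar_eq_smul_addHaar volume (by rw [hdet]; exact hdetpos.ne'),
      hdet, abs_of_pos (inv_pos.mpr hdetpos)]
  have hik := inner_key t s a θ N ha0 β
  rw [← hξ] at hik
  have hkey : ∀ x : R2,
      (starRingEnd ℂ) (curvelet (⇑w) t s a θ b (x + b)) * planeWave α β N (x + b)
        = C * H (gLin t s a θ x) := by
    intro x
    have hexp : Complex.exp ((starRingEnd ℂ)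
            (2 * ↑π * Complex.I * ↑a * ((inner ℝ x (eTheta θ) : ℝ) : ℂ))) *
          Complex.exp (2 * ↑π * Complex.I * ↑N * ((inner ℝ β (x + b) : ℝ) : ℂ))
        = Complex.exp (2 * ↑π * Complex.I * ↑N * ((inner ℝ β b : ℝ) : ℂ)) *
          Complex.exp (-(2 * ↑π * Complex.I) *
            ((inner ℝ (Aa t s a (rot (-θ) x)) ξ : ℝ) : ℂ)) := by
      rw [← Complex.exp_add, ← Complex.exp_add]
      congr 1
      simp only [gLin_apply, map_mul, Complex.conj_I, Complex.conj_ofReal, map_ofNat,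
        inner_add_right, hik]
      push_cast
      ring
    simp only [curvelet, planeWave, hH, hC, gLin_apply, add_sub_cancel_right, map_mul,
      Complex.conj_ofReal]
    rw [← Complex.exp_conj]
    linear_combination (((a ^ ((t + s) / 2) : ℝ) : ℂ) * α *
      (starRingEnd ℂ) (w (Aa t s a (rot (-θ) x)))) * hexp
  have hHcont : Continuous H := by
    rw [hH]
    have h1 : Continuous fun y : R2 => ((inner ℝ y ξ : ℝ) : ℂ) :=
      Complex.continuous_ofReal.comp (continuous_id.inner continuous_const)
    exact (Complex.continuous_exp.comp (continuous_const.mul h1)).mul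
      (Complex.continuous_conj.comp w.continuous)
  have hWg : Integrable (fun x : R2 => w (gLin t s a θ x)) := by
    have h1 : Integrable ⇑w (Measure.map (gLin t s a θ) volume) := by
      rw [hmap]
      exact w.integrable.smul_measure ENNReal.ofReal_ne_top
    exact
      (integrable_map_measure w.continuous.aestronglyMeasurable hgcont.aemeasurable).mp h1
  have hHg : Integrable (fun x : R2 => H (gLin t s a θ x)) := by
    refine Integrable.mono' hWg.norm ((hHcont.comp hgcont).aestronglyMeasurable)
      (Filter.Eventually.of_forall fun x => ?_)
    rw [hH]
    simp only [norm_mul, RCLike.norm_conj]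
    have : ‖Complex.exp (-(2 * ↑π * Complex.I) *
        ((inner ℝ (gLin t s a θ x) ξ : ℝ) : ℂ))‖ = 1 := by
      rw [Complex.norm_exp]
      simp
    rw [this, one_mul]
  have hFeq : (fun x : R2 => (starRingEnd ℂ) (curvelet (⇑w) t s a θ b x) * planeWave α β N x)
      = fun x : R2 => C * H (gLin t s a θ (x - b)) := by
    funext x
    have h := hkey (x - b)
    rwa [sub_add_cancel] at h
  have hInt : Integrable
      (fun x : R2 => (starRingEnd ℂ) (curvelet (⇑w) t s a θ b x) * planeWave α β N x) := by
    rw [hFeq]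
    exact (hHg.const_mul C).comp_sub_right b
  refine ⟨hInt, ?_⟩
  have hft : ∫ y : R2, H y = (starRingEnd ℂ) (ft (⇑w) ξ) := by
    have hrad : ft (⇑w) (-ξ) = ft (⇑w) ξ := hw.2.2.1 (-ξ) ξ (by rw [norm_neg])
    rw [← hrad, ft, ← integral_conj]
    congr 1
    funext y
    have harg : (starRingEnd ℂ) (-(2 * ↑π * Complex.I) * ((inner ℝ y (-ξ) : ℝ) : ℂ))
        = -(2 * ↑π * Complex.I) * ((inner ℝ y ξ : ℝ) : ℂ) := by
      simp only [map_mul, map_neg, Complex.conj_I, Complex.conj_ofReal, map_ofNat,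
        inner_neg_right]
      push_cast
      ring
    simp only [hH, map_mul, ← Complex.exp_conj, harg]
  have hcalc : Wf (⇑w) (planeWave α β N) t s a θ b
      = C * (((a ^ (t + s) : ℝ))⁻¹ • ∫ y : R2, H y) := by
    rw [Wf]
    calc
      ∫ x : R2, (starRingEnd ℂ) (curvelet (⇑w) t s a θ b x) * planeWave α β N x
          = ∫ x : R2, (starRingEnd ℂ) (curvelet (⇑w) t s a θ b (x + b)) *
              planeWave α β N (x + b) :=
        (integral_add_right_eq_self (fun x : R2 =>
          (starRingEnd ℂ) (curvelet (⇑w) t s a θ b x) * planeWave α β N x) b).symm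
      _ = ∫ x : R2, C * H (gLin t s a θ x) := by simp only [hkey]
      _ = C * ∫ x : R2, H (gLin t s a θ x) := integral_const_mul C _
      _ = C * ∫ y : R2, H y ∂(Measure.map (gLin t s a θ) volume) := by
        rw [integral_map hgcont.aemeasurable hHcont.aestronglyMeasurable]
      _ = C * ((ENNReal.ofReal ((a ^ (t + s))⁻¹)).toReal • ∫ y : R2, H y) := by
        rw [hmap, integral_smul_measure]
      _ = C * (((a ^ (t + s) : ℝ))⁻¹ • ∫ y : R2, H y) := by
        rw [ENNReal.toReal_ofReal (inv_nonneg.mpr hdetpos.le)]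
  rw [hcalc, hft]
  have hpow : ((a ^ (-((s + t) / 2)) : ℝ) : ℂ)
      = (((a ^ (t + s) : ℝ))⁻¹ : ℝ) * ((a ^ ((t + s) / 2) : ℝ) : ℂ) := by
    rw [← Complex.ofReal_mul]
    congr 1
    rw [← Real.rpow_neg ha0.le, ← Real.rpow_add ha0]
    congr 1
    ring
  rw [Complex.real_smul, hC, hpow]
  push_cast
  ring
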